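/- If F̄ : T₁ × T₂ × T₃ → ℝ is a measurable function such that A_T F(x,y,z) → F̄(x,y,z) as T → ∞ for μ-almost every (x,y,z), then ∫ F̄ dμ = ∫ F dμ. -/

import Mathlib

open MeasureTheory Filter

section Aux

variable {α V : Type*} [MeasurableSpace α] [MeasurableSpace V]
  {μ : Measure α} {ν : Measure V} [IsFiniteMeasure μ] [IsFiniteMeasure ν]
  {Ψ : V → α → α} {F : α → ℝ}

theorem aux_skew (hΨm : Measurable fun q : V × α => Ψ q.1 q.2)
    (hΨp : ∀ v, MeasurePreserving (Ψ v) μ μ) :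
    MeasurePreserving (fun q : V × α => (q.1, Ψ q.1 q.2)) (ν.prod μ) (ν.prod μ) :=
  (MeasurePreserving.id ν).skew_product hΨm (Filter.Eventually.of_forall fun v => (hΨp v).map_eq)

theorem aux_comp {τ : α → α} (hτ : MeasurePreserving τ μ μ)
    (hFm : AEStronglyMeasurable F μ) : ∫ p, F (τ p) ∂μ = ∫ p, F p ∂μ := by
  conv_rhs => rw [← hτ.map_eq]
  exact (integral_map hτ.aemeasurable (by rwa [hτ.map_eq])).symm

theorem aux_int (hΨm : Measurable fun q : V × α => Ψ q.1 q.2)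
    (hΨp : ∀ v, MeasurePreserving (Ψ v) μ μ) (hF : Integrable F μ) :
    Integrable (fun q : V × α => F (Ψ q.1 q.2)) (ν.prod μ) := by
  have hsnd : MeasurePreserving (Prod.snd : V × α → α) (ν.prod μ) ((ν Set.univ) • μ) :=
    ⟨measurable_snd, Measure.map_snd_prod⟩
  have h1 : Integrable F ((ν Set.univ) • μ) := hF.smul_measure (measure_ne_top ν _)
  have h2 : Integrable (fun q : V × α => F q.2) (ν.prod μ) := by
    rw [← memLp_one_iff_integrable] at h1 ⊢
    exact h1.comp_measurePreserving hsnd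
  have h3 := h2
  rw [← memLp_one_iff_integrable] at h3
  have := h3.comp_measurePreserving (aux_skew hΨm hΨp)
  rw [memLp_one_iff_integrable] at this
  exact this

theorem aux_eq (hΨm : Measurable fun q : V × α => Ψ q.1 q.2)
    (hΨp : ∀ v, MeasurePreserving (Ψ v) μ μ) (hF : Integrable F μ) :
    ∫ p, (∫ v, F (Ψ v p) ∂ν) ∂μ = (ν Set.univ).toReal * ∫ p, F p ∂μ := by
  have hjoint := aux_int (ν := ν) hΨm hΨp hF
  have hswap : Integrable (fun q : α × V => F (Ψ q.2 q.1)) (μ.prod ν) := hjoint.swap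
  have h1 : ∫ p, (∫ v, F (Ψ v p) ∂ν) ∂μ = ∫ v, (∫ p, F (Ψ v p) ∂μ) ∂ν :=
    integral_integral_swap (f := fun p v => F (Ψ v p)) hswap
  rw [h1]
  have h2 : ∀ v, ∫ p, F (Ψ v p) ∂μ = ∫ p, F p ∂μ := fun v => aux_comp (hΨp v) hF.1
  simp only [h2, integral_const, smul_eq_mul]; rfl

theorem aux_bound (hΨm : Measurable fun q : V × α => Ψ q.1 q.2)
    (hΨp : ∀ v, MeasurePreserving (Ψ v) μ μ) (hF : Integrable F μ)
    {Ψ' : V → α → α} (hΨ'p : ∀ v, MeasurePreserving (Ψ' v) μ μ)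
    (hinv : ∀ v p, Ψ v (Ψ' v p) = p)
    {E : Set α} (hE : MeasurableSet E) {C : ℝ} (hC0 : 0 ≤ C)
    (hC : ∀ E' : Set α, MeasurableSet E' → μ E' = μ E → ∫ p in E', ‖F p‖ ∂μ ≤ C) :
    ∫ p in E, ‖∫ v, F (Ψ v p) ∂ν‖ ∂μ ≤ (ν Set.univ).toReal * C := by
  have hjoint := aux_int (ν := ν) hΨm hΨp hF
  have hmaj : Integrable (fun p => ∫ v, ‖F (Ψ v p)‖ ∂ν) μ :=
    hjoint.norm.integral_prod_right
  have hg : Integrable (fun p => ∫ v, F (Ψ v p) ∂ν) μ := hjoint.integral_prod_right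
  have step1 : ∫ p in E, ‖∫ v, F (Ψ v p) ∂ν‖ ∂μ ≤ ∫ p in E, (∫ v, ‖F (Ψ v p)‖ ∂ν) ∂μ := by
    refine setIntegral_mono_on hg.norm.integrableOn hmaj.integrableOn hE fun p _ =>
      norm_integral_le_integral_norm _
  refine step1.trans ?_
  -- rewrite as double integral over restricted measure and swap
  have hres : Integrable (fun q : α × V => ‖F (Ψ q.2 q.1)‖) ((μ.restrict E).prod ν) := by
    have : (μ.restrict E).prod ν = (μ.prod ν).restrict (E ×ˢ Set.univ) := by
      rw [← Measure.prod_restrict, Measure.restrict_univ]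
    rw [this]
    exact hjoint.norm.swap.restrict
  have step2 : ∫ p in E, (∫ v, ‖F (Ψ v p)‖ ∂ν) ∂μ
      = ∫ v, (∫ p in E, ‖F (Ψ v p)‖ ∂μ) ∂ν :=
    integral_integral_swap (μ := μ.restrict E) (f := fun p v => ‖F (Ψ v p)‖) hres
  rw [step2]
  have step3 : ∀ v, ∫ p in E, ‖F (Ψ v p)‖ ∂μ ≤ C := by
    intro v
    have hmeasF : AEStronglyMeasurable (fun p => ‖F (Ψ v p)‖) μ :=
      (hF.1.comp_quasiMeasurePreserving (hΨp v).quasiMeasurePreserving).norm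
    have key : ∫ p in E, ‖F (Ψ v p)‖ ∂μ = ∫ q in (Ψ' v) ⁻¹' E, ‖F q‖ ∂μ := by
      have hE' : MeasurableSet ((Ψ' v) ⁻¹' E) := (hΨ'p v).measurable hE
      rw [← integral_indicator hE, ← integral_indicator hE']
      have hind : AEStronglyMeasurable (E.indicator fun p => ‖F (Ψ v p)‖) μ :=
        hmeasF.indicator hE
      calc ∫ p, E.indicator (fun p => ‖F (Ψ v p)‖) p ∂μ
          = ∫ q, E.indicator (fun p => ‖F (Ψ v p)‖) (Ψ' v q) ∂μ :=
            (aux_comp (hΨ'p v) hind).symm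
        _ = ∫ q, ((Ψ' v) ⁻¹' E).indicator (fun q => ‖F q‖) q ∂μ := by
            refine integral_congr_ae (Filter.Eventually.of_forall fun q => ?_)
            show E.indicator (fun p => ‖F (Ψ v p)‖) (Ψ' v q)
              = (Ψ' v ⁻¹' E).indicator (fun q => ‖F q‖) q
            by_cases hq : Ψ' v q ∈ E
            · rw [Set.indicator_of_mem hq, Set.indicator_of_mem (show q ∈ Ψ' v ⁻¹' E from hq),
                hinv]
            · rw [Set.indicator_of_notMem hq,
                Set.indicator_of_notMem (show q ∉ Ψ' v ⁻¹' E from hq)]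
    rw [key]
    exact hC _ ((hΨ'p v).measurable hE) ((hΨ'p v).measure_preimage hE.nullMeasurableSet)
  calc ∫ v, (∫ p in E, ‖F (Ψ v p)‖ ∂μ) ∂ν ≤ ∫ _v, C ∂ν := by
        refine integral_mono_of_nonneg (Filter.Eventually.of_forall fun v => ?_)
          (integrable_const C) (Filter.Eventually.of_forall step3)
        exact integral_nonneg fun p => norm_nonneg _
    _ = (ν Set.univ).toReal * C := by simp [smul_eq_mul]; exact Or.inl rfl

theorem aux_eLpNorm_indicator {α : Type*} [MeasurableSpace α] {μ : Measure α}
    {h : α → ℝ} (hh : Integrable h μ) {E : Set α} (hE : MeasurableSet E) :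
    eLpNorm (E.indicator h) 1 μ = ENNReal.ofReal (∫ p in E, ‖h p‖ ∂μ) := by
  rw [eLpNorm_one_eq_lintegral_enorm,
    ← ofReal_integral_norm_eq_lintegral_enorm (hh.indicator hE)]
  congr 1
  rw [← integral_indicator hE]
  exact integral_congr_ae (Filter.Eventually.of_forall fun p =>
    norm_indicator_eq_indicator_norm h p)

theorem aux_iterated {T : ℝ} (hT : 0 ≤ T) {G : ℝ × ℝ × ℝ → ℝ}
    (hG : Integrable G (((volume : Measure ℝ).restrict (Set.Ioc 0 T)).prod
      (((volume : Measure ℝ).restrict (Set.Ioc 0 T)).prod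
        ((volume : Measure ℝ).restrict (Set.Ioc 0 T))))) :
    (∫ s in (0:ℝ)..T, ∫ t in (0:ℝ)..T, ∫ u in (0:ℝ)..T, G (s, t, u))
      = ∫ v, G v ∂(((volume : Measure ℝ).restrict (Set.Ioc 0 T)).prod
          (((volume : Measure ℝ).restrict (Set.Ioc 0 T)).prod
            ((volume : Measure ℝ).restrict (Set.Ioc 0 T)))) := by
  simp only [intervalIntegral.integral_of_le hT]
  rw [integral_prod _ hG]
  refine integral_congr_ae ?_
  filter_upwards [hG.prod_right_ae] with s hs
  rw [integral_prod _ hs]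

end Aux

/-- **L¹-Ergodic theorem, part (d).** If the triple time averages of `F` converge a.e. to a
measurable function `F̄`, then (the total measure being finite) `∫ F̄ dμ = ∫ F dμ`. -/
theorem ergodic_time_average_integral_eq
    {T₁ T₂ T₃ : Type*} [MeasurableSpace T₁] [MeasurableSpace T₂] [MeasurableSpace T₃]
    (μ₁ : Measure T₁) (μ₂ : Measure T₂) (μ₃ : Measure T₃)
    [IsFiniteMeasure μ₁] [IsFiniteMeasure μ₂] [IsFiniteMeasure μ₃]
    (Φ₁ : ℝ → T₁ → T₁) (Φ₂ : ℝ → T₂ → T₂) (Φ₃ : ℝ → T₃ → T₃)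
    (hΦ₁ : Measurable fun p : ℝ × T₁ => Φ₁ p.1 p.2)
    (hΦ₂ : Measurable fun p : ℝ × T₂ => Φ₂ p.1 p.2)
    (hΦ₃ : Measurable fun p : ℝ × T₃ => Φ₃ p.1 p.2)
    (hΦ₁0 : ∀ x, Φ₁ 0 x = x) (hΦ₂0 : ∀ y, Φ₂ 0 y = y) (hΦ₃0 : ∀ z, Φ₃ 0 z = z)
    (hΦ₁add : ∀ s t x, Φ₁ (s + t) x = Φ₁ s (Φ₁ t x))
    (hΦ₂add : ∀ s t y, Φ₂ (s + t) y = Φ₂ s (Φ₂ t y))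
    (hΦ₃add : ∀ s t z, Φ₃ (s + t) z = Φ₃ s (Φ₃ t z))
    (hΦ₁pres : ∀ t : ℝ, MeasurePreserving (Φ₁ t) μ₁ μ₁)
    (hΦ₂pres : ∀ t : ℝ, MeasurePreserving (Φ₂ t) μ₂ μ₂)
    (hΦ₃pres : ∀ t : ℝ, MeasurePreserving (Φ₃ t) μ₃ μ₃)
    (F : T₁ × T₂ × T₃ → ℝ)
    (hF : Integrable F (μ₁.prod (μ₂.prod μ₃)))
    (Fbar : T₁ × T₂ × T₃ → ℝ) (hFbar : Measurable Fbar)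
    (hconv : ∀ᵐ p ∂(μ₁.prod (μ₂.prod μ₃)),
      Tendsto (fun T : ℝ =>
          (1 / T ^ 3) * ∫ s in (0:ℝ)..T, ∫ t in (0:ℝ)..T, ∫ u in (0:ℝ)..T,
            F (Φ₁ s p.1, Φ₂ t p.2.1, Φ₃ u p.2.2))
        atTop (nhds (Fbar p))) :
    (∫ p, Fbar p ∂(μ₁.prod (μ₂.prod μ₃))) = ∫ p, F p ∂(μ₁.prod (μ₂.prod μ₃)) := by
  set μ : Measure (T₁ × T₂ × T₃) := μ₁.prod (μ₂.prod μ₃) with hμdef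
  haveI : IsFiniteMeasure μ := by rw [hμdef]; infer_instance
  set Ψ : (ℝ × ℝ × ℝ) → (T₁ × T₂ × T₃) → (T₁ × T₂ × T₃) :=
    fun v p => (Φ₁ v.1 p.1, Φ₂ v.2.1 p.2.1, Φ₃ v.2.2 p.2.2) with hΨdef
  have hΨm : Measurable fun q : (ℝ × ℝ × ℝ) × (T₁ × T₂ × T₃) => Ψ q.1 q.2 :=
    (hΦ₁.comp (measurable_fst.fst.prodMk measurable_snd.fst)).prodMk
      ((hΦ₂.comp (measurable_fst.snd.fst.prodMk measurable_snd.snd.fst)).prodMk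
        (hΦ₃.comp (measurable_fst.snd.snd.prodMk measurable_snd.snd.snd)))
  have hΨp : ∀ v, MeasurePreserving (Ψ v) μ μ := by
    intro v
    have hmap : Ψ v = Prod.map (Φ₁ v.1) (Prod.map (Φ₂ v.2.1) (Φ₃ v.2.2)) := by
      funext p; rfl
    rw [hmap, hμdef]
    exact (hΦ₁pres v.1).prod ((hΦ₂pres v.2.1).prod (hΦ₃pres v.2.2))
  set Ψ' : (ℝ × ℝ × ℝ) → (T₁ × T₂ × T₃) → (T₁ × T₂ × T₃) :=
    fun v => Ψ (-v.1, -v.2.1, -v.2.2) with hΨ'def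
  have hΨ'p : ∀ v, MeasurePreserving (Ψ' v) μ μ := fun v => hΨp _
  have hinv : ∀ v p, Ψ v (Ψ' v p) = p := by
    intro v p
    show (Φ₁ v.1 (Φ₁ (-v.1) p.1), Φ₂ v.2.1 (Φ₂ (-v.2.1) p.2.1),
      Φ₃ v.2.2 (Φ₃ (-v.2.2) p.2.2)) = p
    rw [← hΦ₁add, ← hΦ₂add, ← hΦ₃add]
    simp [hΦ₁0, hΦ₂0, hΦ₃0]
  -- the averaging measures
  set ν : ℝ → Measure (ℝ × ℝ × ℝ) := fun T =>
    ((volume : Measure ℝ).restrict (Set.Ioc 0 T)).prod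
      (((volume : Measure ℝ).restrict (Set.Ioc 0 T)).prod
        ((volume : Measure ℝ).restrict (Set.Ioc 0 T))) with hνdef
  have hfinρ : ∀ T : ℝ, IsFiniteMeasure ((volume : Measure ℝ).restrict (Set.Ioc 0 T)) :=
    fun T => ⟨by simp [Measure.restrict_apply_univ, Real.volume_Ioc]⟩
  have hfinν : ∀ T : ℝ, IsFiniteMeasure (ν T) := fun T => by
    haveI := hfinρ T; rw [hνdef]; infer_instance
  have hνuniv : ∀ T : ℝ, 0 ≤ T → ((ν T) Set.univ).toReal = T ^ 3 := by
    intro T hT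
    haveI := hfinρ T
    rw [hνdef]
    simp only
    rw [← Set.univ_prod_univ, Measure.prod_prod, ← Set.univ_prod_univ, Measure.prod_prod,
      Measure.restrict_apply_univ, Real.volume_Ioc, sub_zero, ENNReal.toReal_mul,
      ENNReal.toReal_mul, ENNReal.toReal_ofReal hT]
    ring
  -- the sequence of averaging times and averaged functions
  set Tn : ℕ → ℝ := fun n => (n : ℝ) + 1 with hTndef
  have hTpos : ∀ n, (0:ℝ) < Tn n := fun n => by positivity
  set f : ℕ → (T₁ × T₂ × T₃) → ℝ := fun n p =>
    (1 / (Tn n) ^ 3) * ∫ v, F (Ψ v p) ∂(ν (Tn n)) with hfdef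
  have hjoint : ∀ n, Integrable (fun q : (ℝ × ℝ × ℝ) × (T₁ × T₂ × T₃) => F (Ψ q.1 q.2))
      ((ν (Tn n)).prod μ) := fun n => by
    haveI := hfinν (Tn n); exact aux_int hΨm hΨp hF
  have h_f_int : ∀ n, Integrable (f n) μ := fun n => by
    haveI := hfinν (Tn n)
    exact ((hjoint n).integral_prod_right).const_mul _
  have h_int_eq : ∀ n, ∫ p, f n p ∂μ = ∫ p, F p ∂μ := by
    intro n
    haveI := hfinν (Tn n)
    rw [hfdef]
    simp only
    rw [integral_const_mul, aux_eq hΨm hΨp hF, hνuniv _ (hTpos n).le]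
    have h3 : (Tn n) ^ 3 ≠ 0 := by positivity
    field_simp [(hTpos n).ne']
  have hbound : ∀ (n : ℕ) (E : Set (T₁ × T₂ × T₃)), MeasurableSet E → ∀ C : ℝ, 0 ≤ C →
      (∀ E', MeasurableSet E' → μ E' = μ E → ∫ p in E', ‖F p‖ ∂μ ≤ C) →
      ∫ p in E, ‖f n p‖ ∂μ ≤ C := by
    intro n E hE C hC0 hC
    haveI := hfinν (Tn n)
    have h1 := aux_bound (ν := ν (Tn n)) hΨm hΨp hF hΨ'p hinv hE hC0 hC
    have hpow : (0:ℝ) < (Tn n) ^ 3 := by positivity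
    calc ∫ p in E, ‖f n p‖ ∂μ
        = (1 / (Tn n) ^ 3) * ∫ p in E, ‖∫ v, F (Ψ v p) ∂(ν (Tn n))‖ ∂μ := by
          rw [← integral_const_mul]
          refine integral_congr_ae (Filter.Eventually.of_forall fun p => ?_)
          rw [hfdef]
          simp only [norm_mul, Real.norm_eq_abs]
          rw [abs_of_pos (by positivity : (0:ℝ) < 1 / (Tn n) ^ 3)]
      _ ≤ (1 / (Tn n) ^ 3) * (((ν (Tn n)) Set.univ).toReal * C) := by
          refine mul_le_mul_of_nonneg_left h1 (by positivity)
      _ = C := by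
          rw [hνuniv _ (hTpos n).le]
          field_simp [(hTpos n).ne']
  -- a.e. convergence of the discretized averages
  have h_ae_slice : ∀ᵐ p ∂μ, ∀ n, Integrable (fun v => F (Ψ v p)) (ν (Tn n)) := by
    rw [ae_all_iff]
    intro n
    haveI := hfinν (Tn n)
    exact (hjoint n).prod_left_ae
  have h_conv' : ∀ᵐ p ∂μ, Tendsto (fun n => f n p) atTop (nhds (Fbar p)) := by
    filter_upwards [hconv, h_ae_slice] with p hp hsl
    have ht : Tendsto Tn atTop atTop := by
      rw [hTndef]
      exact tendsto_atTop_add_const_right _ 1 tendsto_natCast_atTop_atTop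
    refine Tendsto.congr (fun n => ?_) (hp.comp ht)
    show (1 / (Tn n) ^ 3) * (∫ s in (0:ℝ)..(Tn n), ∫ t in (0:ℝ)..(Tn n), ∫ u in (0:ℝ)..(Tn n),
      F (Φ₁ s p.1, Φ₂ t p.2.1, Φ₃ u p.2.2)) = f n p
    rw [hfdef]
    simp only
    congr 1
    exact aux_iterated (hTpos n).le (G := fun v => F (Ψ v p)) (hsl n)
  -- F̄ is integrable (Fatou)
  have hFnorm : ∀ n, ∫ p, ‖f n p‖ ∂μ ≤ ∫ p, ‖F p‖ ∂μ := by
    intro n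
    have := hbound n Set.univ MeasurableSet.univ (∫ p, ‖F p‖ ∂μ)
      (integral_nonneg fun p => norm_nonneg _)
      (fun E' hE' _ => setIntegral_le_integral hF.norm
        (Filter.Eventually.of_forall fun p => norm_nonneg _))
    rwa [setIntegral_univ] at this
  have hFbar_mem : MemLp Fbar 1 μ := by
    refine ⟨hFbar.aestronglyMeasurable, ?_⟩
    rw [eLpNorm_one_eq_lintegral_enorm]
    have hle : ∀ n, ∫⁻ p, ‖f n p‖ₑ ∂μ ≤ ENNReal.ofReal (∫ p, ‖F p‖ ∂μ) := by
      intro n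
      rw [← ofReal_integral_norm_eq_lintegral_enorm (h_f_int n)]
      exact ENNReal.ofReal_le_ofReal (hFnorm n)
    have hliminf : ∫⁻ p, ‖Fbar p‖ₑ ∂μ ≤ liminf (fun n => ∫⁻ p, ‖f n p‖ₑ ∂μ) atTop := by
      have hmeas : ∀ n, AEMeasurable (fun p => ‖f n p‖ₑ) μ := fun n =>
        (h_f_int n).aestronglyMeasurable.enorm
      calc ∫⁻ p, ‖Fbar p‖ₑ ∂μ
          = ∫⁻ p, liminf (fun n => ‖f n p‖ₑ) atTop ∂μ := by
            refine lintegral_congr_ae ?_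
            filter_upwards [h_conv'] with p hp
            exact ((hp.enorm).liminf_eq).symm
        _ ≤ liminf (fun n => ∫⁻ p, ‖f n p‖ₑ ∂μ) atTop := lintegral_liminf_le' hmeas
    have h2 : liminf (fun n => ∫⁻ p, ‖f n p‖ₑ ∂μ) atTop ≤ ENNReal.ofReal (∫ p, ‖F p‖ ∂μ) :=
      liminf_le_of_frequently_le (Filter.Frequently.of_forall hle)
    exact lt_of_le_of_lt (hliminf.trans h2) ENNReal.ofReal_lt_top
  -- uniform integrability
  have hui : UnifIntegrable f 1 μ := by
    intro ε hε
    obtain ⟨δ, hδpos, hδ⟩ := (memLp_one_iff_integrable.mpr hF).eLpNorm_indicator_le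
      le_rfl ENNReal.one_ne_top hε
    refine ⟨δ, hδpos, fun n E hE hEμ => ?_⟩
    have hCE : ∀ E', MeasurableSet E' → μ E' = μ E → ∫ p in E', ‖F p‖ ∂μ ≤ ε := by
      intro E' hE' hEE'
      have h1 := hδ E' hE' (le_trans (le_of_eq hEE') hEμ)
      rw [aux_eLpNorm_indicator hF hE'] at h1
      exact (ENNReal.ofReal_le_ofReal_iff hε.le).mp h1
    rw [aux_eLpNorm_indicator (h_f_int n) hE]
    exact ENNReal.ofReal_le_ofReal (hbound n E hE ε hε.le hCE)
  -- Vitali convergence theorem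
  have hLp := tendsto_Lp_finite_of_tendsto_ae (μ := μ) le_rfl ENNReal.one_ne_top
    (fun n => (h_f_int n).aestronglyMeasurable) hFbar_mem hui h_conv'
  have hFbar_int : Integrable Fbar μ := memLp_one_iff_integrable.mp hFbar_mem
  have htendsto : Tendsto (fun n => ∫ p, f n p ∂μ) atTop (nhds (∫ p, Fbar p ∂μ)) := by
    refine tendsto_integral_of_L1 _ hFbar_int.1 (Filter.Eventually.of_forall h_f_int) ?_
    have heq : ∀ n, (∫⁻ p, ‖f n p - Fbar p‖ₑ ∂μ) = eLpNorm (f n - Fbar) 1 μ := fun n => by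
      rw [eLpNorm_one_eq_lintegral_enorm]; rfl
    simp_rw [heq]
    exact hLp
  have htendsto' : Tendsto (fun _ : ℕ => ∫ p, F p ∂μ) atTop (nhds (∫ p, Fbar p ∂μ)) := by
    refine htendsto.congr fun n => h_int_eq n
  exact tendsto_nhds_unique htendsto' tendsto_const_nhds
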